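/- The overdetermined system w' = -√(κp/q)(1-w²)^{q-p+1} f^{2p-2q-1} and w' = -√(q/(κp))(1-w²)^{p-q+1} f^{2q-2p-1}, with p ≠ q positive integers and κ > 0, has the solution f(ρ) = r₀ sin(ρ/ρ₀), w(ρ) = cos(ρ/ρ₀) where r₀ = (κp/q)^{1/(4(q-p))} and ρ₀ = r₀; i.e., with f = r₀ sin(ρ/r₀) and w = cos(ρ/r₀), both equations hold simultaneously. -/

import Mathlib

lemma key18 (a s : ℝ) (ha : a ≠ 0) (hs : s ≠ 0) (m : ℤ) :
    a ^ (2*m) * (s^2) ^ (m+1) * (a*s) ^ (-(2*m) - 1) = s / a := by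
  have h1 : (s:ℝ)^2 = s ^ (2:ℤ) := by rw [pow_two, zpow_two]
  rw [h1, ← zpow_mul, mul_zpow,
    show a ^ (2*m) * s ^ (2*(m+1)) * (a ^ (-(2*m)-1) * s ^ (-(2*m)-1))
      = (a ^ (2*m) * a ^ (-(2*m)-1)) * (s ^ (2*(m+1)) * s ^ (-(2*m)-1)) by ring,
    ← zpow_add₀ ha, ← zpow_add₀ hs,
    show 2*m + (-(2*m)-1) = -1 by ring, show 2*(m+1) + (-(2*m)-1) = 1 by ring,
    zpow_neg_one, zpow_one]
  exact inv_mul_eq_div a s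

theorem stmt18 (p q : ℕ) (hp : 0 < p) (hq : 0 < q) (hpq : p ≠ q)
    (κ : ℝ) (hκ : 0 < κ) (r₀ : ℝ)
    (hr₀ : r₀ = (κ * p / q) ^ ((1:ℝ) / (4 * ((q:ℝ) - (p:ℝ)))))
    (f w : ℝ → ℝ)
    (hf : ∀ ρ, f ρ = r₀ * Real.sin (ρ / r₀))
    (hw : ∀ ρ, w ρ = Real.cos (ρ / r₀)) :
    ∀ ρ : ℝ, 0 < ρ → ρ < Real.pi * r₀ →
      HasDerivAt w (-(Real.sqrt (κ * p / q) * (1 - (w ρ)^2) ^ ((q:ℤ) - (p:ℤ) + 1)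
        * f ρ ^ (2*(p:ℤ) - 2*(q:ℤ) - 1))) ρ ∧
      HasDerivAt w (-(Real.sqrt ((q:ℝ) / (κ * p)) * (1 - (w ρ)^2) ^ ((p:ℤ) - (q:ℤ) + 1)
        * f ρ ^ (2*(q:ℤ) - 2*(p:ℤ) - 1))) ρ := by
  intro ρ hρ0 hρπ
  have hqR : (0:ℝ) < q := by exact_mod_cast hq
  have hpR : (0:ℝ) < p := by exact_mod_cast hp
  have hc : (0:ℝ) < κ * p / q := by positivity
  have ha : 0 < r₀ := hr₀ ▸ Real.rpow_pos_of_pos hc _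
  have hdne : (q:ℝ) - (p:ℝ) ≠ 0 := by
    have : (q:ℝ) ≠ (p:ℝ) := by exact_mod_cast (Ne.symm hpq)
    intro h; apply this; linarith
  set a := r₀ with ha'
  set s := Real.sin (ρ / a) with hs'
  have hs : 0 < s := by
    apply Real.sin_pos_of_pos_of_lt_pi
    · positivity
    · rw [div_lt_iff₀ ha]; linarith [hρπ]
  set m : ℤ := (q:ℤ) - (p:ℤ) with hm
  have hmR : ((m:ℝ)) = (q:ℝ) - (p:ℝ) := by push_cast [hm]; ring
  -- √(κp/q) = a ^ (2m)
  have hsqrt : Real.sqrt (κ * p / q) = a ^ (2*m) := by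
    have h1 : a ^ (2*m) = (κ * p / q) ^ (((2*m : ℤ) : ℝ) * ((1:ℝ) / (4 * ((q:ℝ) - (p:ℝ))))) := by
      rw [← Real.rpow_intCast a (2*m), hr₀, ← Real.rpow_mul hc.le]
      ring_nf
    have h2 : ((2*m : ℤ) : ℝ) * ((1:ℝ) / (4 * ((q:ℝ) - (p:ℝ)))) = 1/2 := by
      push_cast [hmR]
      field_simp
      ring
    rw [h1, h2]
    exact Real.sqrt_eq_rpow _
  have hsqrt2 : Real.sqrt ((q:ℝ) / (κ * p)) = a ^ (2*(-m)) := by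
    have : ((q:ℝ) / (κ * p)) = (κ * p / q)⁻¹ := by
      field_simp
    rw [this, Real.sqrt_inv, hsqrt, show 2*(-m) = -(2*m) by ring, zpow_neg]
  -- 1 - w² = s²
  have hw2 : 1 - (w ρ)^2 = s^2 := by
    rw [hw ρ]
    have := Real.sin_sq_add_cos_sq (ρ / a)
    rw [hs']; linarith
  have hfρ : f ρ = a * s := by rw [hf ρ, hs', ha']
  -- derivative
  have hwderiv : HasDerivAt w (-(s / a)) ρ := by
    have hweq : w = fun x => Real.cos (x / a) := funext hw
    rw [hweq]
    have h1 : HasDerivAt (fun x : ℝ => x / a) (1 / a) ρ := (hasDerivAt_id ρ).div_const a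
    have h2 := (Real.hasDerivAt_cos (ρ / a)).comp ρ h1
    refine h2.congr_deriv ?_
    rw [hs']
    field_simp
  constructor
  · have heq : -(Real.sqrt (κ * p / q) * (1 - (w ρ)^2) ^ ((q:ℤ) - (p:ℤ) + 1)
        * f ρ ^ (2*(p:ℤ) - 2*(q:ℤ) - 1)) = -(s / a) := by
      rw [hsqrt, hw2, hfρ, show ((q:ℤ) - (p:ℤ) + 1) = m + 1 from rfl,
        show (2*(p:ℤ) - 2*(q:ℤ) - 1) = -(2*m) - 1 by rw [hm]; ring,
        key18 a s ha.ne' hs.ne' m]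
    rw [heq]; exact hwderiv
  · have heq : -(Real.sqrt ((q:ℝ) / (κ * p)) * (1 - (w ρ)^2) ^ ((p:ℤ) - (q:ℤ) + 1)
        * f ρ ^ (2*(q:ℤ) - 2*(p:ℤ) - 1)) = -(s / a) := by
      rw [hsqrt2, hw2, hfρ, show ((p:ℤ) - (q:ℤ) + 1) = -m + 1 by rw [hm]; ring,
        show (2*(q:ℤ) - 2*(p:ℤ) - 1) = -(2*(-m)) - 1 by rw [hm]; ring,
        key18 a s ha.ne' hs.ne' (-m)]
    rw [heq]; exact hwderiv
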